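/- For nonnegative integers a, b with a ≤ b, expanding ((A+2C+E)/2)^b + ((A+2C−E)/2)^b and substituting E² = A² − 4CD yields ∑_{a+d≤b, a,d≥0} (−1)^d A^a C^{b−a−d} D^d · ((a+2d)/(a+d)) · C(a+d, a) · C(b, b−a−2d); in particular, all coefficients of this polynomial in A, C, D are integers. -/
import Mathlib


open Finset

private def myT (a d : ℕ) : ℕ := (a + d).choose a + (a + d - 1).choose a

private lemma myT_zero_left (d : ℕ) : myT 0 d = 2 := by
  cases d <;> simp [myT]

private lemma myT_zero_right (a : ℕ) : myT (a + 1) 0 = 1 := by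
  simp [myT, Nat.choose_succ_self]

private lemma myT_pascal (a d : ℕ) : myT (a + 1) (d + 1) = myT a (d + 1) + myT (a + 1) d := by
  simp only [myT, show a + 1 + (d + 1) = (a + d + 1) + 1 by omega,
    show a + (d + 1) = (a + d) + 1 by omega, show a + 1 + d = (a + d) + 1 by omega,
    Nat.succ_sub_one]
  rw [Nat.choose_succ_succ (a + d + 1) a, Nat.choose_succ_succ (a + d) a]
  ring

private def myt {K : Type*} [Field K] (A q : K) (n d : ℕ) : K :=
  if 2 * d ≤ n then (-1) ^ d * A ^ (n - 2 * d) * q ^ d * (myT (n - 2 * d) d : ℕ) else 0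

private def myG {K : Type*} [Field K] (A q : K) (n : ℕ) : K :=
  ∑ d ∈ range (n + 1), myt A q n d

private lemma myt_eq_zero {K : Type*} [Field K] (A q : K) {n d : ℕ} (h : n < 2 * d) :
    myt A q n d = 0 := by
  rw [myt, if_neg (by omega)]

private lemma myt_rec {K : Type*} [Field K] (A q : K) (n d : ℕ) :
    myt A q (n + 2) (d + 1) = A * myt A q (n + 1) (d + 1) - q * myt A q n d := by
  rcases lt_trichotomy (2 * (d + 1)) (n + 2) with h | h | h
  · -- 2d + 2 ≤ n + 1, main Pascal case
    obtain ⟨a, rfl⟩ : ∃ a, n = a + 1 + 2 * d := ⟨n - 1 - 2 * d, by omega⟩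
    rw [myt, if_pos (by omega), myt, if_pos (by omega), myt, if_pos (by omega)]
    rw [show a + 1 + 2 * d + 2 - 2 * (d + 1) = a + 1 by omega,
      show a + 1 + 2 * d + 1 - 2 * (d + 1) = a by omega,
      show a + 1 + 2 * d - 2 * d = a + 1 by omega, myT_pascal a d]
    push_cast
    ring
  · -- 2(d+1) = n + 2, i.e. n = 2d
    obtain rfl : n = 2 * d := by omega
    rw [myt, if_pos (by omega), myt_eq_zero A q (by omega), myt, if_pos (by omega)]
    rw [show 2 * d + 2 - 2 * (d + 1) = 0 by omega, Nat.sub_self, myT_zero_left,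
      myT_zero_left]
    push_cast
    ring
  · rw [myt_eq_zero A q (by omega), myt_eq_zero A q (by omega),
      myt_eq_zero A q (show n < 2 * d by omega)]
    ring

private lemma myG_rec {K : Type*} [Field K] (A q : K) (n : ℕ) :
    myG A q (n + 2) = A * myG A q (n + 1) - q * myG A q n := by
  have h1 : myG A q (n + 2) = ∑ d ∈ range (n + 2), myt A q (n + 2) (d + 1) + myt A q (n + 2) 0 :=
    Finset.sum_range_succ' _ _
  have h2 : ∑ d ∈ range (n + 2), myt A q (n + 2) (d + 1)
      = ∑ d ∈ range (n + 2), (A * myt A q (n + 1) (d + 1) - q * myt A q n d) :=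
    Finset.sum_congr rfl fun d _ => myt_rec A q n d
  have h3 : myG A q (n + 1) + myt A q (n + 1) (n + 2)
      = ∑ d ∈ range (n + 2), myt A q (n + 1) (d + 1) + myt A q (n + 1) 0 := by
    rw [myG, ← Finset.sum_range_succ]
    exact Finset.sum_range_succ' _ _
  rw [myt_eq_zero A q (by omega), add_zero] at h3
  have h4 : ∑ d ∈ range (n + 2), myt A q n d = myG A q n + myt A q n (n + 1) :=
    Finset.sum_range_succ _ _
  rw [myt_eq_zero A q (by omega), add_zero] at h4
  have h5 : myt A q (n + 2) 0 = A * myt A q (n + 1) 0 := by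
    rw [myt, if_pos (by omega), myt, if_pos (by omega)]
    simp only [Nat.mul_zero, Nat.sub_zero, myT_zero_right]
    push_cast
    ring
  have hA : ∑ d ∈ range (n + 2), A * myt A q (n + 1) (d + 1)
      = A * ∑ d ∈ range (n + 2), myt A q (n + 1) (d + 1) := (Finset.mul_sum _ _ _).symm
  have hq' : ∑ d ∈ range (n + 2), q * myt A q n d
      = q * ∑ d ∈ range (n + 2), myt A q n d := (Finset.mul_sum _ _ _).symm
  rw [h1, h2, Finset.sum_sub_distrib, hA, hq', h4, h5, h3]
  ring

private lemma pow_add_pow_eq_myG {K : Type*} [Field K] (A q u v : K)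
    (hs : u + v = A) (hp : u * v = q) (n : ℕ) : u ^ n + v ^ n = myG A q n := by
  have key : ∀ m, u ^ m + v ^ m = myG A q m ∧ u ^ (m + 1) + v ^ (m + 1) = myG A q (m + 1) := by
    intro m
    induction m with
    | zero =>
      constructor
      · simp [myG, myt, myT]
        norm_num
      · have h01 : myG A q 1 = A := by
          rw [myG, Finset.sum_range_succ, Finset.sum_range_one,
            show myt A q 1 1 = 0 from myt_eq_zero A q (by norm_num), add_zero,
            myt, if_pos (by norm_num)]
          simp [myT]
        rw [h01, pow_one, pow_one, hs]
    | succ m ih =>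
      refine ⟨ih.2, ?_⟩
      rw [myG_rec, ← ih.1, ← ih.2, ← hs, ← hp]
      ring
  exact (key n).1

/-- if E² = A² − 4CD, then
((A+2C+E)/2)^b + ((A+2C−E)/2)^b
  = ∑_{a+d≤b} (−1)^d A^a C^{b−a−d} D^d (C(a+d,a)+C(a+d−1,a)) C(b,b−a−2d);
in particular this polynomial in A, C, D has integer coefficients. (Here
(a+2d)/(a+d)·C(a+d,a) = C(a+d,a)+C(a+d−1,a), and C(b,b−a−2d) is zero when
a+2d > b, i.e. it equals C(b,a+2d).) -/
theorem statement8 {K : Type*} [Field K] [CharZero K] (A C D E : K)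
    (hE : E ^ 2 = A ^ 2 - 4 * C * D) (b : ℕ) :
    ((A + 2 * C + E) / 2) ^ b + ((A + 2 * C - E) / 2) ^ b
      = ∑ a ∈ range (b + 1), ∑ d ∈ range (b + 1 - a),
          (-1) ^ d * A ^ a * C ^ (b - a - d) * D ^ d *
            (((a + d).choose a + (a + d - 1).choose a : ℕ) : K) *
            (b.choose (a + 2 * d) : K) := by
  set u : K := (A + E) / 2 with hu
  set v : K := (A - E) / 2 with hv
  have hs : u + v = A := by rw [hu, hv]; ring
  have hp : u * v = C * D := by
    rw [hu, hv]
    field_simp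
    linear_combination -hE
  have hx : (A + 2 * C + E) / 2 = u + C := by rw [hu]; ring
  have hy : (A + 2 * C - E) / 2 = v + C := by rw [hv]; ring
  rw [hx, hy, add_pow, add_pow, ← Finset.sum_add_distrib]
  have step1 : ∀ k ∈ range (b + 1),
      u ^ k * C ^ (b - k) * (b.choose k : K) + v ^ k * C ^ (b - k) * (b.choose k : K)
        = myG A (C * D) k * C ^ (b - k) * (b.choose k : K) := by
    intro k _
    rw [← pow_add_pow_eq_myG A (C * D) u v hs hp k]
    ring
  rw [Finset.sum_congr rfl step1]
  -- Now reindex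
  have step2 : ∀ k ∈ range (b + 1),
      myG A (C * D) k * C ^ (b - k) * (b.choose k : K)
        = ∑ d ∈ range (b + 1), myt A (C * D) k d * C ^ (b - k) * (b.choose k : K) := by
    intro k hk
    rw [myG, Finset.sum_mul, Finset.sum_mul]
    refine Finset.sum_subset (Finset.range_subset_range.2 (by
      simp only [Finset.mem_range] at hk; omega)) ?_
    intro d _ hd
    simp only [Finset.mem_range, not_lt] at hd
    rw [myt_eq_zero A (C * D) (by omega)]
    ring
  rw [Finset.sum_congr rfl step2, ← Finset.sum_product']
  have step3 : ∀ a ∈ range (b + 1),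
      (∑ d ∈ range (b + 1 - a), (-1) ^ d * A ^ a * C ^ (b - a - d) * D ^ d *
            (((a + d).choose a + (a + d - 1).choose a : ℕ) : K) *
            (b.choose (a + 2 * d) : K))
      = ∑ d ∈ range (b + 1), (-1) ^ d * A ^ a * C ^ (b - a - d) * D ^ d *
            (((a + d).choose a + (a + d - 1).choose a : ℕ) : K) *
            (b.choose (a + 2 * d) : K) := by
    intro a ha
    simp only [Finset.mem_range] at ha
    refine Finset.sum_subset (Finset.range_subset_range.2 (Nat.sub_le _ _)) ?_
    intro d _ hd
    simp only [Finset.mem_range, not_lt] at hd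
    rw [Nat.choose_eq_zero_of_lt (show b < a + 2 * d by omega)]
    simp
  rw [Finset.sum_congr rfl step3, ← Finset.sum_product']
  rw [← Finset.sum_filter_add_sum_filter_not (range (b+1) ×ˢ range (b+1))
    (fun p => 2 * p.2 ≤ p.1)]
  rw [← Finset.sum_filter_add_sum_filter_not (range (b+1) ×ˢ range (b+1))
    (fun p => p.1 + 2 * p.2 ≤ b)
    (fun p => (-1) ^ p.2 * A ^ p.1 * C ^ (b - p.1 - p.2) * D ^ p.2 *
            (((p.1 + p.2).choose p.1 + (p.1 + p.2 - 1).choose p.1 : ℕ) : K) *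
            (b.choose (p.1 + 2 * p.2) : K))]
  have z1 : ∑ p ∈ (range (b+1) ×ˢ range (b+1)).filter (fun p => ¬ 2 * p.2 ≤ p.1),
      myt A (C * D) p.1 p.2 * C ^ (b - p.1) * (b.choose p.1 : K) = 0 := by
    refine Finset.sum_eq_zero fun p hp => ?_
    simp only [Finset.mem_filter, not_le] at hp
    rw [myt_eq_zero A (C * D) (by omega)]
    ring
  have z2 : ∑ p ∈ (range (b+1) ×ˢ range (b+1)).filter (fun p => ¬ p.1 + 2 * p.2 ≤ b),
      (-1) ^ p.2 * A ^ p.1 * C ^ (b - p.1 - p.2) * D ^ p.2 *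
            (((p.1 + p.2).choose p.1 + (p.1 + p.2 - 1).choose p.1 : ℕ) : K) *
            (b.choose (p.1 + 2 * p.2) : K) = 0 := by
    refine Finset.sum_eq_zero fun p hp => ?_
    simp only [Finset.mem_filter, not_le] at hp
    rw [Nat.choose_eq_zero_of_lt (show b < p.1 + 2 * p.2 by omega)]
    simp
  rw [z1, z2, add_zero, add_zero]
  refine Finset.sum_nbij' (fun p => (p.1 - 2 * p.2, p.2)) (fun p => (p.1 + 2 * p.2, p.2))
    ?_ ?_ ?_ ?_ ?_
  · intro p hp
    simp only [Finset.mem_filter, Finset.mem_product, Finset.mem_range] at hp ⊢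
    omega
  · intro p hp
    simp only [Finset.mem_filter, Finset.mem_product, Finset.mem_range] at hp ⊢
    omega
  · rintro ⟨j, d⟩ hp
    simp only [Finset.mem_filter, Finset.mem_product, Finset.mem_range] at hp
    simp only [Prod.mk.injEq]
    exact ⟨by omega, trivial⟩
  · rintro ⟨j, d⟩ hp
    simp only [Finset.mem_filter, Finset.mem_product, Finset.mem_range] at hp
    simp only [Prod.mk.injEq]
    exact ⟨by omega, trivial⟩
  · rintro ⟨j, d⟩ hp
    simp only [Finset.mem_filter, Finset.mem_product, Finset.mem_range] at hp
    obtain ⟨⟨hj, hd⟩, hjd⟩ := hp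
    obtain ⟨a, rfl⟩ : ∃ a, j = a + 2 * d := ⟨j - 2 * d, by omega⟩
    simp only
    rw [myt, if_pos (by omega)]
    simp only [Nat.add_sub_cancel]
    rw [show b - a - d = (b - (a + 2 * d)) + d by omega, pow_add, mul_pow, myT]
    push_cast
    ring
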